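/- Let W and T be real n×n matrices with W symmetric positive definite and T symmetric positive semidefinite, and let α, β > 0. Then the spectral radius of the TTSCSP iteration matrix is given exactly by ρ(G_{α,β}) = max over the eigenvalues μ of S = W^{-1/2} T W^{-1/2} of |(μ - β)(1 - αμ)| / ((1 + βμ)(α + μ)). -/

import Mathlib

open Matrix

/-- The positive semidefinite square root of a positive semidefinite matrix (the definition
`Matrix.PosSemidef.sqrt` of the older Mathlib, since removed; restated verbatim). -/
noncomputable def Matrix.PosSemidef.sqrt {n 𝕜 : Type*} [Fintype n] [DecidableEq n] [RCLike 𝕜] [PartialOrder 𝕜]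
    {A : Matrix n n 𝕜} (hA : A.PosSemidef) : Matrix n n 𝕜 :=
  hA.1.eigenvectorUnitary.1 * diagonal ((↑) ∘ (√·) ∘ hA.1.eigenvalues) *
  (star hA.1.eigenvectorUnitary : Matrix n n 𝕜)

theorem Matrix.PosSemidef.sqrt_mul_self {n : Type*} [Fintype n] [DecidableEq n]
    {A : Matrix n n ℝ} (hA : A.PosSemidef) : hA.sqrt * hA.sqrt = A := by
  have hU1 : star (hA.1.eigenvectorUnitary : Matrix n n ℝ) * hA.1.eigenvectorUnitary.1 = 1 :=
    (Matrix.mem_unitaryGroup_iff').mp hA.1.eigenvectorUnitary.2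
  have hspec := hA.1.spectral_theorem
  rw [Unitary.conjStarAlgAut_apply] at hspec
  unfold Matrix.PosSemidef.sqrt
  have hmid : ∀ X Y : Matrix n n ℝ, hA.1.eigenvectorUnitary.1 * X *
      star (hA.1.eigenvectorUnitary : Matrix n n ℝ) *
      (hA.1.eigenvectorUnitary.1 * Y * star (hA.1.eigenvectorUnitary : Matrix n n ℝ))
      = hA.1.eigenvectorUnitary.1 * (X * Y) * star (hA.1.eigenvectorUnitary : Matrix n n ℝ) := by
    intro X Y
    simp only [mul_assoc]
    rw [← mul_assoc (star _) _ (Y * _), hU1, one_mul]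
  rw [hmid, diagonal_mul_diagonal]
  conv_rhs => rw [hspec]
  congr 2
  funext i
  ext j
  simp only [diagonal_apply]
  split_ifs with h
  · subst h; simp [Real.mul_self_sqrt (hA.eigenvalues_nonneg i)]
  · rfl

theorem Matrix.PosSemidef.posSemidef_sqrt {n : Type*} [Fintype n] [DecidableEq n]
    {A : Matrix n n ℝ} (hA : A.PosSemidef) : hA.sqrt.PosSemidef := by
  unfold Matrix.PosSemidef.sqrt
  have h := (Matrix.PosSemidef.diagonal (R := ℝ) (n := n)
    (d := (RCLike.ofReal : ℝ → ℝ) ∘ (√·) ∘ hA.1.eigenvalues) (fun i => by simp [Real.sqrt_nonneg])).mul_mul_conjTranspose_same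
    (hA.1.eigenvectorUnitary : Matrix n n ℝ)
  rwa [← star_eq_conjTranspose] at h

/-- **Exact spectral radius formula.** For `α, β > 0`, the spectral radius of the TTSCSP
iteration matrix equals the maximum over the eigenvalues `μ` of `S = W^{-1/2} T W^{-1/2}`
of `|(μ - β)(1 - αμ)| / ((1 + βμ)(α + μ))`. -/
theorem ttscsp_spectral_radius_formula
    {n : ℕ} (hn : 0 < n)
    (W T : Matrix (Fin n) (Fin n) ℝ)
    (hW : W.PosDef) (hT : T.PosSemidef)
    (S : Matrix (Fin n) (Fin n) ℝ)
    (hSdef : S = (hW.posSemidef.sqrt)⁻¹ * T * (hW.posSemidef.sqrt)⁻¹)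
    (hS : S.IsHermitian)
    (α β : ℝ) (hα : 0 < α) (hβ : 0 < β) :
    spectralRadius ℂ
        (((W + β • T)⁻¹ * (T - β • W) * (α • W + T)⁻¹ * (W - α • T)).map Complex.ofReal) =
      ENNReal.ofReal (⨆ i,
        |(hS.eigenvalues i - β) * (1 - α * hS.eigenvalues i)| /
          ((1 + β * hS.eigenvalues i) * (α + hS.eigenvalues i))) := by
  haveI : Nonempty (Fin n) := ⟨⟨0, hn⟩⟩
  set Q := hW.posSemidef.sqrt with hQ
  have hQQ : Q * Q = W := hW.posSemidef.sqrt_mul_self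
  have hQdet : IsUnit Q.det := by
    have h2 : Q.det * Q.det = W.det := by rw [← det_mul, hQQ]
    have hWdet : W.det ≠ 0 := hW.det_pos.ne'
    exact (show Q.det ≠ 0 from fun h => hWdet (by rw [← h2, h, mul_zero])).isUnit
  have hQinv : Q⁻¹ * Q = 1 := nonsing_inv_mul Q hQdet
  have hQinv' : Q * Q⁻¹ = 1 := mul_nonsing_inv Q hQdet
  have hQherm : Q.IsHermitian := hW.posSemidef.posSemidef_sqrt.1
  have hTS : T = Q * S * Q := by
    rw [hSdef]
    have h3 : Q * (Q⁻¹ * T * Q⁻¹) * Q = (Q * Q⁻¹) * T * (Q⁻¹ * Q) := by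
      simp only [mul_assoc]
    rw [h3, hQinv, hQinv', one_mul, mul_one]
  have hSpsd : S.PosSemidef := by
    have h4 := hT.conjTranspose_mul_mul_same (Q⁻¹)
    rwa [(hQherm.inv).eq, ← hSdef] at h4
  -- eigenvalues
  set d := hS.eigenvalues with hd
  have hd0 : ∀ i, 0 ≤ d i := fun i => hSpsd.eigenvalues_nonneg i
  have hden1 : ∀ i, 0 < 1 + β * d i := fun i => by nlinarith [mul_nonneg hβ.le (hd0 i)]
  have hden2 : ∀ i, 0 < α + d i := fun i => by nlinarith [hd0 i]
  -- spectral theorem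
  set U : Matrix (Fin n) (Fin n) ℝ := (hS.eigenvectorUnitary : Matrix (Fin n) (Fin n) ℝ) with hUdef
  set D : Matrix (Fin n) (Fin n) ℝ := diagonal d with hD
  have hspec : S = U * D * star U := by
    have := hS.spectral_theorem
    rwa [Unitary.conjStarAlgAut_apply, RCLike.ofReal_real_eq_id, Function.id_comp] at this
  have hU2 : U * star U = 1 := (Matrix.mem_unitaryGroup_iff).mp hS.eigenvectorUnitary.2
  have hU1 : star U * U = 1 := (Matrix.mem_unitaryGroup_iff').mp hS.eigenvectorUnitary.2
  have hUinv : U⁻¹ = star U := inv_eq_left_inv hU1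
  have hsUinv : (star U)⁻¹ = U := inv_eq_left_inv hU2
  -- conjugation machinery (by U)
  have hc_mul : ∀ M N : Matrix (Fin n) (Fin n) ℝ,
      (U * M * star U) * (U * N * star U) = U * (M * N) * star U := by
    intro M N
    have hmid : star U * (U * (N * star U)) = N * star U := by
      rw [← mul_assoc, hU1, one_mul]
    simp only [mul_assoc, hmid]
  have hc_inv : ∀ M : Matrix (Fin n) (Fin n) ℝ,
      (U * M * star U)⁻¹ = U * M⁻¹ * star U := by
    intro M
    rw [Matrix.mul_inv_rev, Matrix.mul_inv_rev, hUinv, hsUinv, mul_assoc]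
  have hc_add : ∀ M N : Matrix (Fin n) (Fin n) ℝ,
      (U * M * star U) + (U * N * star U) = U * (M + N) * star U := by
    intro M N; rw [mul_add, add_mul]
  have hc_smul : ∀ (c : ℝ) (M : Matrix (Fin n) (Fin n) ℝ),
      c • (U * M * star U) = U * (c • M) * star U := by
    intro c M; rw [mul_smul_comm, smul_mul_assoc]
  have hc_sub : ∀ M N : Matrix (Fin n) (Fin n) ℝ,
      (U * M * star U) - (U * N * star U) = U * (M - N) * star U := by
    intro M N; rw [mul_sub, sub_mul]
  have hc_one : (1 : Matrix (Fin n) (Fin n) ℝ) = U * 1 * star U := by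
    rw [mul_one, hU2]
  -- conjugation machinery (by Q)
  have hq_add : ∀ M N : Matrix (Fin n) (Fin n) ℝ,
      (Q * M * Q) + (Q * N * Q) = Q * (M + N) * Q := by
    intro M N; rw [mul_add, add_mul]
  have hq_smul : ∀ (c : ℝ) (M : Matrix (Fin n) (Fin n) ℝ),
      c • (Q * M * Q) = Q * (c • M) * Q := by
    intro c M; rw [mul_smul_comm, smul_mul_assoc]
  have hq_sub : ∀ M N : Matrix (Fin n) (Fin n) ℝ,
      (Q * M * Q) - (Q * N * Q) = Q * (M - N) * Q := by
    intro M N; rw [mul_sub, sub_mul]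
  have hq_one : Q * 1 * Q = W := by rw [mul_one, hQQ]
  have hq_inv : ∀ M : Matrix (Fin n) (Fin n) ℝ,
      (Q * M * Q)⁻¹ = Q⁻¹ * M⁻¹ * Q⁻¹ := by
    intro M; rw [Matrix.mul_inv_rev, Matrix.mul_inv_rev, mul_assoc]
  -- the four factors at the W/T level
  have g1 : W + β • T = Q * (1 + β • S) * Q := by
    rw [← hq_add, ← hq_smul, hq_one, ← hTS]
  have g2 : T - β • W = Q * (S - β • 1) * Q := by
    rw [← hq_sub, ← hq_smul, hq_one, ← hTS]
  have g3 : α • W + T = Q * (α • 1 + S) * Q := by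
    rw [← hq_add, ← hq_smul, hq_one, ← hTS]
  have g4 : W - α • T = Q * (1 - α • S) * Q := by
    rw [← hq_sub, ← hq_smul, hq_one, ← hTS]
  have c1 : ∀ X : Matrix (Fin n) (Fin n) ℝ, Q⁻¹ * (Q * X) = X := fun X => by
    rw [← mul_assoc, hQinv, one_mul]
  have c2 : ∀ X : Matrix (Fin n) (Fin n) ℝ, Q * (Q⁻¹ * X) = X := fun X => by
    rw [← mul_assoc, hQinv', one_mul]
  have hGfact : (W + β • T)⁻¹ * (T - β • W) * (α • W + T)⁻¹ * (W - α • T)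
      = Q⁻¹ * ((1 + β • S)⁻¹ * (S - β • 1) * (α • 1 + S)⁻¹ * (1 - α • S)) * Q := by
    rw [g1, g2, g3, g4, hq_inv, hq_inv]
    simp only [mul_assoc, c1, c2]
  -- the four factors at the S level as conjugates of diagonal matrices
  have f1 : U * (1 + β • D) * star U = 1 + β • S := by
    rw [← hc_add, ← hc_smul, ← hc_one, ← hspec]
  have f2 : U * (D - β • 1) * star U = S - β • 1 := by
    rw [← hc_sub, ← hc_smul, ← hc_one, ← hspec]
  have f3 : U * (α • 1 + D) * star U = α • 1 + S := by
    rw [← hc_add, ← hc_smul, ← hc_one, ← hspec]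
  have f4 : U * (1 - α • D) * star U = 1 - α • S := by
    rw [← hc_sub, ← hc_smul, ← hc_one, ← hspec]
  have hFc : (1 + β • S)⁻¹ * (S - β • 1) * (α • 1 + S)⁻¹ * (1 - α • S)
      = U * ((1 + β • D)⁻¹ * (D - β • 1) * (α • 1 + D)⁻¹ * (1 - α • D)) * star U := by
    rw [← f1, ← f2, ← f3, ← f4, hc_inv, hc_inv, hc_mul, hc_mul, hc_mul]
  -- the diagonal form
  set e : Fin n → ℝ := fun i =>
    (1 + β * d i)⁻¹ * (d i - β) * (α + d i)⁻¹ * (1 - α * d i) with he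
  have hdiaginv : ∀ (f : Fin n → ℝ), (∀ i, f i ≠ 0) →
      (diagonal f)⁻¹ = diagonal (fun i => (f i)⁻¹) := by
    intro f hf
    apply inv_eq_right_inv
    rw [diagonal_mul_diagonal,
      show (fun i => f i * (f i)⁻¹) = fun _ => (1 : ℝ) from
        funext fun i => mul_inv_cancel₀ (hf i), diagonal_one]
  have k1 : (1 : Matrix (Fin n) (Fin n) ℝ) + β • D = diagonal (fun i => 1 + β * d i) := by
    rw [hD, ← diagonal_smul, ← diagonal_one, diagonal_add]
    congr 1
  have k2 : D - β • (1 : Matrix (Fin n) (Fin n) ℝ) = diagonal (fun i => d i - β) := by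
    rw [hD, ← diagonal_one, ← diagonal_smul, diagonal_sub]
    congr 1
    funext i; simp
  have k3 : α • (1 : Matrix (Fin n) (Fin n) ℝ) + D = diagonal (fun i => α + d i) := by
    rw [hD, ← diagonal_one, ← diagonal_smul, diagonal_add]
    congr 1
    funext i; simp
  have k4 : (1 : Matrix (Fin n) (Fin n) ℝ) - α • D = diagonal (fun i => 1 - α * d i) := by
    rw [hD, ← diagonal_smul, ← diagonal_one, diagonal_sub]
    congr 1
  have hE : (1 + β • D)⁻¹ * (D - β • 1) * (α • 1 + D)⁻¹ * (1 - α • D) = diagonal e := by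
    rw [k1, k2, k3, k4, hdiaginv _ (fun i => (hden1 i).ne'),
      hdiaginv _ (fun i => (hden2 i).ne'),
      diagonal_mul_diagonal, diagonal_mul_diagonal, diagonal_mul_diagonal]
  -- the similarity
  set P : Matrix (Fin n) (Fin n) ℝ := Q⁻¹ * U with hP
  set P' : Matrix (Fin n) (Fin n) ℝ := star U * Q with hP'
  have hPP' : P * P' = 1 := by
    rw [hP, hP']
    have h5 : U * (star U * Q) = Q := by rw [← mul_assoc, hU2, one_mul]
    rw [mul_assoc, h5, hQinv]
  have hP'P : P' * P = 1 := by
    rw [hP, hP']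
    have h5 : Q * (Q⁻¹ * U) = U := by rw [← mul_assoc, hQinv', one_mul]
    rw [mul_assoc, h5, hU1]
  have hGP : (W + β • T)⁻¹ * (T - β • W) * (α • W + T)⁻¹ * (W - α • T)
      = P * diagonal e * P' := by
    rw [hGfact, hFc, hE, hP, hP']
    simp only [mul_assoc]
  -- map to ℂ
  have hofReal : (Complex.ofReal : ℝ → ℂ) = ⇑Complex.ofRealHom := rfl
  have hmap : ((W + β • T)⁻¹ * (T - β • W) * (α • W + T)⁻¹ * (W - α • T)).map Complex.ofReal
      = (P.map Complex.ofReal) * (diagonal (fun i => (e i : ℂ))) * (P'.map Complex.ofReal) := by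
    rw [hGP, hofReal, Matrix.map_mul, Matrix.map_mul, diagonal_map (by simp)]
  have hPmap1 : (P.map Complex.ofReal) * (P'.map Complex.ofReal) = 1 := by
    rw [hofReal, ← Matrix.map_mul, hPP', Matrix.map_one _ (by simp) (by simp)]
  have hPmap2 : (P'.map Complex.ofReal) * (P.map Complex.ofReal) = 1 := by
    rw [hofReal, ← Matrix.map_mul, hP'P, Matrix.map_one _ (by simp) (by simp)]
  set u : (Matrix (Fin n) (Fin n) ℂ)ˣ :=
    ⟨P.map Complex.ofReal, P'.map Complex.ofReal, hPmap1, hPmap2⟩ with hu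
  have hspecGc : spectrum ℂ
      (((W + β • T)⁻¹ * (T - β • W) * (α • W + T)⁻¹ * (W - α • T)).map Complex.ofReal)
      = Set.range (fun i => (e i : ℂ)) := by
    rw [hmap]
    have hconj : (P.map Complex.ofReal) * (diagonal (fun i => (e i : ℂ))) * (P'.map Complex.ofReal)
        = (u : Matrix (Fin n) (Fin n) ℂ) * (diagonal (fun i => (e i : ℂ)))
          * ((u⁻¹ : (Matrix (Fin n) (Fin n) ℂ)ˣ) : Matrix (Fin n) (Fin n) ℂ) := rfl
    rw [hconj, spectrum.units_conjugate, spectrum_diagonal]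
  -- compute the spectral radius
  unfold spectralRadius
  rw [hspecGc, iSup_range]
  have habs : ∀ i, ((‖(e i : ℂ)‖₊ : NNReal) : ENNReal)
      = ENNReal.ofReal (|(d i - β) * (1 - α * d i)| / ((1 + β * d i) * (α + d i))) := by
    intro i
    rw [Complex.nnnorm_real, ← enorm_eq_nnnorm, ← ofReal_norm, Real.norm_eq_abs]
    congr 1
    rw [he]
    have h1 := hden1 i
    have h2 := hden2 i
    rw [abs_mul, abs_mul, abs_mul, abs_inv, abs_inv, abs_of_pos h1, abs_of_pos h2, abs_mul]
    field_simp
  simp only [habs]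
  -- exchange sup and ofReal
  obtain ⟨i₀, hmax⟩ := Finite.exists_max (fun i =>
    |(d i - β) * (1 - α * d i)| / ((1 + β * d i) * (α + d i)))
  have hsup1 : (⨆ i, ENNReal.ofReal
      (|(d i - β) * (1 - α * d i)| / ((1 + β * d i) * (α + d i))))
      = ENNReal.ofReal (|(d i₀ - β) * (1 - α * d i₀)| / ((1 + β * d i₀) * (α + d i₀))) :=
    le_antisymm (iSup_le fun i => ENNReal.ofReal_le_ofReal (hmax i)) (le_iSup (fun i => ENNReal.ofReal
      (|(d i - β) * (1 - α * d i)| / ((1 + β * d i) * (α + d i)))) i₀)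
  have hsup2 : (⨆ i, |(d i - β) * (1 - α * d i)| / ((1 + β * d i) * (α + d i)))
      = |(d i₀ - β) * (1 - α * d i₀)| / ((1 + β * d i₀) * (α + d i₀)) :=
    le_antisymm (ciSup_le hmax) (le_ciSup (Set.Finite.bddAbove (Set.finite_range
      (fun i => |(d i - β) * (1 - α * d i)| / ((1 + β * d i) * (α + d i))))) i₀)
  rw [hsup1, hsup2]
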